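/- Let V_Y and W_Y be r×r real symmetric positive definite matrices, let U ∈ St(r,p₁) with orthonormal completion U⊥, and let Y ∈ ℝ^{p₂×r} have full column rank r. Let D ∈ ℝ^{(p₁−r)×r}, set θ_U := U⊥D, let θ_Y ∈ ℝ^{p₂×r} be arbitrary, and set ξ := U θ_Yᵀ + θ_U Yᵀ. Then, with g := tr(V_Y DᵀD) + tr(W_Y θ_Yᵀθ_Y) and V_Y^{1/2} the symmetric positive definite square root of V_Y, it holds that min( λmin(W_Y⁻¹), λmin(V_Y^{-1/2} YᵀY V_Y^{-1/2}) )·g ≤ ‖ξ‖_F² ≤ max( λmax(W_Y⁻¹), λmax(V_Y^{-1/2} YᵀY V_Y^{-1/2}) )·g. -/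

import Mathlib

open Matrix

/-- The smallest eigenvalue of a (Hermitian) real matrix; junk value `0` otherwise. -/
noncomputable def eigMin {n : ℕ} (M : Matrix (Fin n) (Fin n) ℝ) : ℝ := by
  classical exact if h : M.IsHermitian then ⨅ i, h.eigenvalues i else 0

/-- The largest eigenvalue of a (Hermitian) real matrix; junk value `0` otherwise. -/
noncomputable def eigMax {n : ℕ} (M : Matrix (Fin n) (Fin n) ℝ) : ℝ := by
  classical exact if h : M.IsHermitian then ⨆ i, h.eigenvalues i else 0

/-- The squared Frobenius norm `‖A‖_F² = tr(AᵀA)`. -/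
noncomputable def frobSq {m n : ℕ} (A : Matrix (Fin m) (Fin n) ℝ) : ℝ :=
  Matrix.trace (Aᵀ * A)

/-- The positive semidefinite square root of a positive semidefinite matrix, spelled out as
`Matrix.PosSemidef.sqrt` was defined in the older Mathlib (since removed). -/
noncomputable def psdSqrt {n : Type*} [Fintype n] [DecidableEq n] {A : Matrix n n ℝ}
    (hA : A.PosSemidef) : Matrix n n ℝ :=
  hA.1.eigenvectorUnitary.1 * diagonal ((↑) ∘ (√·) ∘ hA.1.eigenvalues) *
  (star hA.1.eigenvectorUnitary : Matrix n n ℝ)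

lemma psdSqrt_posSemidef {n : ℕ} {A : Matrix (Fin n) (Fin n) ℝ} (hA : A.PosSemidef) :
    (psdSqrt hA).PosSemidef := by
  unfold psdSqrt
  have hd : (diagonal ((↑) ∘ (√·) ∘ hA.1.eigenvalues) : Matrix (Fin n) (Fin n) ℝ).PosSemidef :=
    Matrix.PosSemidef.diagonal (Pi.le_def.mpr fun i => by simp [Real.sqrt_nonneg])
  have := hd.mul_mul_conjTranspose_same hA.1.eigenvectorUnitary.1
  simpa [Matrix.star_eq_conjTranspose] using this

lemma psdSqrt_mul_self {n : ℕ} {A : Matrix (Fin n) (Fin n) ℝ} (hA : A.PosSemidef) :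
    psdSqrt hA * psdSqrt hA = A := by
  unfold psdSqrt
  have hu : (star hA.1.eigenvectorUnitary : Matrix (Fin n) (Fin n) ℝ) * hA.1.eigenvectorUnitary.1 = 1 :=
    (Matrix.mem_unitaryGroup_iff').mp (hA.1.eigenvectorUnitary).2
  have hdd : (diagonal ((↑) ∘ (√·) ∘ hA.1.eigenvalues) : Matrix (Fin n) (Fin n) ℝ) *
      diagonal ((↑) ∘ (√·) ∘ hA.1.eigenvalues) = diagonal hA.1.eigenvalues := by
    rw [diagonal_mul_diagonal]
    congr 1; funext i
    simp [Real.mul_self_sqrt (hA.eigenvalues_nonneg i)]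
  have hsp := hA.1.spectral_theorem
  simp only [Unitary.conjStarAlgAut_apply] at hsp
  calc _ = hA.1.eigenvectorUnitary.1 * (diagonal ((↑) ∘ (√·) ∘ hA.1.eigenvalues) *
      ((star hA.1.eigenvectorUnitary : Matrix (Fin n) (Fin n) ℝ) * hA.1.eigenvectorUnitary.1) *
      diagonal ((↑) ∘ (√·) ∘ hA.1.eigenvalues)) * (star hA.1.eigenvectorUnitary : Matrix (Fin n) (Fin n) ℝ) := by
        simp only [Matrix.mul_assoc]
    _ = A := by
        rw [hu, Matrix.mul_one, hdd]
        conv_rhs => rw [hsp]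
        simp

lemma cancel_left {n m : ℕ} {M N : Matrix (Fin n) (Fin n) ℝ} (h : M * N = 1)
    (A : Matrix (Fin n) (Fin m) ℝ) : M * (N * A) = A := by
  rw [← Matrix.mul_assoc, h, Matrix.one_mul]

lemma psd_trace_nonneg {n : ℕ} {M : Matrix (Fin n) (Fin n) ℝ} (hM : M.PosSemidef) :
    0 ≤ M.trace := by
  refine Finset.sum_nonneg fun i _ => ?_
  exact hM.diag_nonneg

lemma psd_trace_mul_nonneg {n : ℕ} {P Q : Matrix (Fin n) (Fin n) ℝ}
    (hP : P.PosSemidef) (hQ : Q.PosSemidef) : 0 ≤ (P * Q).trace := by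
  have h : (psdSqrt hP * Q * psdSqrt hP).PosSemidef := by
    have := hQ.mul_mul_conjTranspose_same (psdSqrt hP)
    rwa [(psdSqrt_posSemidef hP).1.eq] at this
  have h2 := psd_trace_nonneg h
  rwa [Matrix.trace_mul_cycle, psdSqrt_mul_self hP] at h2

lemma eig_smul_sub_posSemidef {n : ℕ} {S : Matrix (Fin n) (Fin n) ℝ} (hS : S.IsHermitian) :
    (S - eigMin S • 1).PosSemidef ∧ (eigMax S • 1 - S).PosSemidef := by
  classical
  rcases isEmpty_or_nonempty (Fin n) with hn | hn
  · constructor <;>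
      exact ⟨by ext i j; exact hn.elim i, fun x => by simp [dotProduct, Subsingleton.elim x 0]⟩
  · have hmin : eigMin S = ⨅ i, hS.eigenvalues i := by
      unfold eigMin; rw [dif_pos hS]
    have hmax : eigMax S = ⨆ i, hS.eigenvalues i := by
      unfold eigMax; rw [dif_pos hS]
    set V : Matrix (Fin n) (Fin n) ℝ := (hS.eigenvectorUnitary : Matrix (Fin n) (Fin n) ℝ)
      with hVdef
    have hVV : V * star V = 1 :=
      (Matrix.mem_unitaryGroup_iff).mp (hS.eigenvectorUnitary).2
    have hsp : S = V * Matrix.diagonal hS.eigenvalues * star V := by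
      have := hS.spectral_theorem
      simpa [hVdef] using this
    have h1 : ∀ c : ℝ, (c • (1 : Matrix (Fin n) (Fin n) ℝ))
        = Matrix.diagonal (fun _ => c) := by
      intro c
      ext i j
      by_cases h : i = j <;> simp [Matrix.one_apply, Matrix.diagonal_apply, h]
    have key : ∀ c : ℝ, S - c • 1 =
        V * Matrix.diagonal (fun i => hS.eigenvalues i - c) * star V := by
      intro c
      have hg : (Matrix.diagonal (fun i => hS.eigenvalues i - c) : Matrix (Fin n) (Fin n) ℝ)
          = Matrix.diagonal hS.eigenvalues - Matrix.diagonal (fun _ => c) := by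
        ext i j
        by_cases h : i = j <;> simp [Matrix.diagonal_apply, h]
      rw [hg, Matrix.mul_sub, Matrix.sub_mul, ← hsp, ← h1]
      congr 1
      rw [Matrix.mul_smul, Matrix.smul_mul, Matrix.mul_one, hVV]
    have key2 : ∀ c : ℝ, c • 1 - S =
        V * Matrix.diagonal (fun i => c - hS.eigenvalues i) * star V := by
      intro c
      have h := key c
      have h2 : c • (1 : Matrix (Fin n) (Fin n) ℝ) - S = -(S - c • 1) := by abel
      have hg2 : (Matrix.diagonal (fun i => c - hS.eigenvalues i) : Matrix (Fin n) (Fin n) ℝ)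
          = -(Matrix.diagonal (fun i => hS.eigenvalues i - c)) := by
        ext i j
        by_cases hij : i = j <;> simp [Matrix.diagonal_apply, hij]
      rw [h2, h, hg2, Matrix.mul_neg, Matrix.neg_mul]
    constructor
    · rw [key]
      have hdiag : (Matrix.diagonal (fun i => hS.eigenvalues i - eigMin S)).PosSemidef := by
        refine Matrix.PosSemidef.diagonal (Pi.le_def.mpr fun i => ?_)
        have : eigMin S ≤ hS.eigenvalues i := by
          rw [hmin]; exact ciInf_le (Finite.bddBelow_range _) i
        simpa using sub_nonneg.2 this
      have := hdiag.mul_mul_conjTranspose_same V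
      rwa [← Matrix.star_eq_conjTranspose] at this
    · rw [key2]
      have hdiag : (Matrix.diagonal (fun i => eigMax S - hS.eigenvalues i)).PosSemidef := by
        refine Matrix.PosSemidef.diagonal (Pi.le_def.mpr fun i => ?_)
        have : hS.eigenvalues i ≤ eigMax S := by
          rw [hmax]; exact le_ciSup (Finite.bddAbove_range _) i
        simpa using sub_nonneg.2 this
      have := hdiag.mul_mul_conjTranspose_same V
      rwa [← Matrix.star_eq_conjTranspose] at this

lemma eig_trace_bounds {n : ℕ} {P S : Matrix (Fin n) (Fin n) ℝ}
    (hP : P.PosSemidef) (hS : S.IsHermitian) :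
    eigMin S * P.trace ≤ (P * S).trace ∧ (P * S).trace ≤ eigMax S * P.trace := by
  obtain ⟨hmin, hmax⟩ := eig_smul_sub_posSemidef hS
  have h1 := psd_trace_mul_nonneg hP hmin
  have h2 := psd_trace_mul_nonneg hP hmax
  rw [Matrix.mul_sub, Matrix.trace_sub, Matrix.mul_smul, Matrix.mul_one,
    Matrix.trace_smul, smul_eq_mul] at h1
  rw [Matrix.mul_sub, Matrix.trace_sub, Matrix.mul_smul, Matrix.mul_one,
    Matrix.trace_smul, smul_eq_mul] at h2
  constructor <;> linarith

/-- Spectrum bounds for the map `(θ_U, θ_Y) ↦ Uθ_Yᵀ + θ_UYᵀ` on the horizontal space of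
the subspace-projection quotient geometry on fixed-rank matrices. Here `hVY.posSemidef.sqrt`
is the symmetric positive definite square root `V_Y^{1/2}` of `V_Y`. -/
theorem stmt15 {p₁ p₂ r : ℕ}
    (VY WY : Matrix (Fin r) (Fin r) ℝ) (hVY : VY.PosDef) (hWY : WY.PosDef)
    (U : Matrix (Fin p₁) (Fin r) ℝ) (Uperp : Matrix (Fin p₁) (Fin (p₁ - r)) ℝ)
    (hU : Uᵀ * U = 1) (hUperp : Uperpᵀ * Uperp = 1) (hUUperp : Uᵀ * Uperp = 0)
    (Y : Matrix (Fin p₂) (Fin r) ℝ) (hY : Y.rank = r)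
    (D : Matrix (Fin (p₁ - r)) (Fin r) ℝ)
    (θU : Matrix (Fin p₁) (Fin r) ℝ) (hθU : θU = Uperp * D)
    (θY : Matrix (Fin p₂) (Fin r) ℝ)
    (ξ : Matrix (Fin p₁) (Fin p₂) ℝ) (hξ : ξ = U * θYᵀ + θU * Yᵀ)
    (g : ℝ) (hg : g = Matrix.trace (VY * Dᵀ * D) + Matrix.trace (WY * θYᵀ * θY)) :
    min (eigMin WY⁻¹)
        (eigMin ((psdSqrt hVY.posSemidef)⁻¹ * (Yᵀ * Y) * (psdSqrt hVY.posSemidef)⁻¹)) * g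
      ≤ frobSq ξ ∧
    frobSq ξ ≤
      max (eigMax WY⁻¹)
        (eigMax ((psdSqrt hVY.posSemidef)⁻¹ * (Yᵀ * Y) * (psdSqrt hVY.posSemidef)⁻¹)) * g := by
  classical
  set R := psdSqrt hVY.posSemidef with hRdef
  set T := psdSqrt hWY.posSemidef with hTdef
  have hRR : R * R = VY := psdSqrt_mul_self hVY.posSemidef
  have hTT : T * T = WY := psdSqrt_mul_self hWY.posSemidef
  have hRherm : R.IsHermitian := (psdSqrt_posSemidef hVY.posSemidef).1
  have hTherm : T.IsHermitian := (psdSqrt_posSemidef hWY.posSemidef).1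
  -- invertibility of the square roots
  have hRdet : IsUnit R.det := by
    have h : R.det * R.det = VY.det := by rw [← Matrix.det_mul, hRR]
    have h2 := hVY.det_pos
    refine isUnit_iff_ne_zero.2 fun h0 => ?_
    rw [h0, mul_zero] at h; linarith [h2, h.symm ▸ h2]
  have hTdet : IsUnit T.det := by
    have h : T.det * T.det = WY.det := by rw [← Matrix.det_mul, hTT]
    have h2 := hWY.det_pos
    refine isUnit_iff_ne_zero.2 fun h0 => ?_
    rw [h0, mul_zero] at h; linarith [h2, h.symm ▸ h2]
  have hRRi : R * R⁻¹ = 1 := Matrix.mul_nonsing_inv R hRdet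
  have hRiR : R⁻¹ * R = 1 := Matrix.nonsing_inv_mul R hRdet
  have hTTi : T * T⁻¹ = 1 := Matrix.mul_nonsing_inv T hTdet
  have hTiT : T⁻¹ * T = 1 := Matrix.nonsing_inv_mul T hTdet
  -- Hermitian targets
  have hWinv : (WY⁻¹).IsHermitian := hWY.isHermitian.inv
  have hYY : (Yᵀ * Y).IsHermitian := by
    have := Matrix.isHermitian_conjTranspose_mul_self Y
    rwa [Matrix.conjTranspose_eq_transpose_of_trivial] at this
  have hSv : (R⁻¹ * (Yᵀ * Y) * R⁻¹).IsHermitian := by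
    have := Matrix.isHermitian_mul_mul_conjTranspose (R⁻¹) hYY
    rwa [hRherm.inv.eq] at this
  -- PSD building blocks
  have hθθ : (θYᵀ * θY).PosSemidef := by
    have := Matrix.posSemidef_conjTranspose_mul_self θY
    rwa [Matrix.conjTranspose_eq_transpose_of_trivial] at this
  have hDD : (Dᵀ * D).PosSemidef := by
    have := Matrix.posSemidef_conjTranspose_mul_self D
    rwa [Matrix.conjTranspose_eq_transpose_of_trivial] at this
  have hPw : (T * (θYᵀ * θY) * T).PosSemidef := by
    have := hθθ.mul_mul_conjTranspose_same T
    rwa [hTherm.eq] at this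
  have hPv : (R * (Dᵀ * D) * R).PosSemidef := by
    have := hDD.mul_mul_conjTranspose_same R
    rwa [hRherm.eq] at this
  -- trace identities
  have tPw : (T * (θYᵀ * θY) * T).trace = Matrix.trace (WY * θYᵀ * θY) := by
    rw [Matrix.trace_mul_cycle, hTT, Matrix.mul_assoc]
  have tPv : (R * (Dᵀ * D) * R).trace = Matrix.trace (VY * Dᵀ * D) := by
    rw [Matrix.trace_mul_cycle, hRR, Matrix.mul_assoc]
  have pw : ((T * (θYᵀ * θY) * T) * WY⁻¹).trace = (θYᵀ * θY).trace := by
    rw [← hTT, Matrix.mul_inv_rev]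
    have h : (T * (θYᵀ * θY) * T) * (T⁻¹ * T⁻¹) = T * (θYᵀ * θY) * T⁻¹ := by
      simp only [Matrix.mul_assoc, cancel_left hTTi]
    rw [h, Matrix.trace_mul_cycle, ← Matrix.mul_assoc, hTiT, Matrix.one_mul]
  have pv : ((R * (Dᵀ * D) * R) * (R⁻¹ * (Yᵀ * Y) * R⁻¹)).trace
      = ((Dᵀ * D) * (Yᵀ * Y)).trace := by
    have h : (R * (Dᵀ * D) * R) * (R⁻¹ * (Yᵀ * Y) * R⁻¹)
        = R * ((Dᵀ * D) * ((Yᵀ * Y) * R⁻¹)) := by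
      simp only [Matrix.mul_assoc, cancel_left hRRi]
    rw [h, Matrix.trace_mul_comm]
    simp only [Matrix.mul_assoc, hRiR, Matrix.mul_one]
  -- expansion of ξᵀ ξ
  have hPU : Uperpᵀ * U = 0 := by
    have h := congrArg Matrix.transpose hUUperp
    simpa [Matrix.transpose_mul] using h
  have cUU : ∀ {m : ℕ} (A : Matrix (Fin r) (Fin m) ℝ), Uᵀ * (U * A) = A := fun A => by
    rw [← Matrix.mul_assoc, hU, Matrix.one_mul]
  have cPP : ∀ {m : ℕ} (A : Matrix (Fin (p₁ - r)) (Fin m) ℝ),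
      Uperpᵀ * (Uperp * A) = A := fun A => by
    rw [← Matrix.mul_assoc, hUperp, Matrix.one_mul]
  have cUP : ∀ {m : ℕ} (A : Matrix (Fin (p₁ - r)) (Fin m) ℝ),
      Uᵀ * (Uperp * A) = 0 := fun A => by
    rw [← Matrix.mul_assoc, hUUperp, Matrix.zero_mul]
  have cPU : ∀ {m : ℕ} (A : Matrix (Fin r) (Fin m) ℝ),
      Uperpᵀ * (U * A) = 0 := fun A => by
    rw [← Matrix.mul_assoc, hPU, Matrix.zero_mul]
  have hexp : ξᵀ * ξ = θY * θYᵀ + Y * (Dᵀ * (D * Yᵀ)) := by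
    subst hξ hθU
    simp only [Matrix.transpose_add, Matrix.transpose_mul, Matrix.transpose_transpose,
      Matrix.add_mul, Matrix.mul_add, Matrix.mul_assoc, cUU, cPP, cUP, cPU,
      Matrix.mul_zero, Matrix.zero_mul, add_zero, zero_add]
  have hfrob : frobSq ξ = (θYᵀ * θY).trace + ((Dᵀ * D) * (Yᵀ * Y)).trace := by
    unfold frobSq
    rw [hexp, Matrix.trace_add, Matrix.trace_mul_comm θY θYᵀ,
      Matrix.trace_mul_comm Y (Dᵀ * (D * Yᵀ))]
    congr 1
    simp only [Matrix.mul_assoc]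
  -- bounds from the eigenvalue lemma
  have bw := eig_trace_bounds hPw hWinv
  have bv := eig_trace_bounds hPv hSv
  rw [pw, tPw] at bw
  rw [pv, tPv] at bv
  have h0w : 0 ≤ Matrix.trace (WY * θYᵀ * θY) := tPw ▸ psd_trace_nonneg hPw
  have h0v : 0 ≤ Matrix.trace (VY * Dᵀ * D) := tPv ▸ psd_trace_nonneg hPv
  subst hg
  rw [hfrob]
  set a := eigMin WY⁻¹
  set b := eigMin (R⁻¹ * (Yᵀ * Y) * R⁻¹)
  set a' := eigMax WY⁻¹
  set b' := eigMax (R⁻¹ * (Yᵀ * Y) * R⁻¹)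
  constructor
  · rw [mul_add]
    have h1 := mul_le_mul_of_nonneg_right (min_le_left a b) h0w
    have h2 := mul_le_mul_of_nonneg_right (min_le_right a b) h0v
    linarith [bw.1, bv.1]
  · rw [mul_add]
    have h1 := mul_le_mul_of_nonneg_right (le_max_left a' b') h0w
    have h2 := mul_le_mul_of_nonneg_right (le_max_right a' b') h0v
    linarith [bw.2, bv.2]
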